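/- Let k be a field and n ≥ 1. Let ψ be the k-algebra homomorphism from B = k[x_1,…,x_n, y_1,…,y_n, z_1^{±1},…,z_n^{±1}] (polynomial in the x's and y's, Laurent in the z's) to the Laurent polynomial ring T = k[x_1^{±1},…,x_n^{±1}, y_1^{±1},…,y_n^{±1}] determined by ψ(x_i) = x_i, ψ(y_i) = y_i, and ψ(z_i) = x_i y_i^{−1}. Then the kernel of ψ is the ideal ⟨ y_i z_i − x_i : i = 1, …, n ⟩ of B. -/

import Mathlib

noncomputable section

/-- `B = k[x₁,…,xₙ, y₁,…,yₙ, z₁^{±1},…,zₙ^{±1}]`, the monoid algebra of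
`ℕⁿ × ℕⁿ × ℤⁿ` over `k`. -/
abbrev MixedRing (k : Type*) [Field k] (n : ℕ) :=
  AddMonoidAlgebra k ((Fin n → ℕ) × (Fin n → ℕ) × (Fin n → ℤ))

/-- `T = k[x₁^{±1},…,xₙ^{±1}, y₁^{±1},…,yₙ^{±1}]`, the monoid algebra of `ℤ²ⁿ`
over `k`. -/
abbrev LaurentRing2 (k : Type*) [Field k] (n : ℕ) :=
  AddMonoidAlgebra k ((Fin n → ℤ) × (Fin n → ℤ))

variable (k : Type*) [Field k] (n : ℕ)

/-- The variable `x_i` of `B`. -/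
def bX (i : Fin n) : MixedRing k n := AddMonoidAlgebra.single (Pi.single i 1, 0, 0) 1

/-- The variable `y_i` of `B`. -/
def bY (i : Fin n) : MixedRing k n := AddMonoidAlgebra.single (0, Pi.single i 1, 0) 1

/-- The variable `z_i` of `B`. -/
def bZ (i : Fin n) : MixedRing k n := AddMonoidAlgebra.single (0, 0, Pi.single i 1) 1

/-- The Laurent monomial `x_i` of `T`. -/
def tX (i : Fin n) : LaurentRing2 k n := AddMonoidAlgebra.single ((Pi.single i 1 : Fin n → ℤ), 0) 1

/-- The Laurent monomial `y_i` of `T`. -/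
def tY (i : Fin n) : LaurentRing2 k n := AddMonoidAlgebra.single (0, (Pi.single i 1 : Fin n → ℤ)) 1

/-- The Laurent monomial `x_i y_i^{−1}` of `T`. -/
def tXYinv (i : Fin n) : LaurentRing2 k n :=
  AddMonoidAlgebra.single ((Pi.single i 1 : Fin n → ℤ), -(Pi.single i 1 : Fin n → ℤ)) 1

variable {n}

/-- monomial in `B` -/
def MS (u : (Fin n → ℕ) × (Fin n → ℕ) × (Fin n → ℤ)) : MixedRing k n :=
  AddMonoidAlgebra.single u 1

/-- monomial in `T` -/
def LS (u : (Fin n → ℤ) × (Fin n → ℤ)) : LaurentRing2 k n :=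
  AddMonoidAlgebra.single u 1

variable {k}

lemma MS_mul (u v) : MS k u * MS k v = MS (n := n) k (u + v) := by
  simp [MS, AddMonoidAlgebra.single_mul_single]

lemma MS_pow (u) (m : ℕ) : MS k u ^ m = MS (n := n) k (m • u) := by
  simp [MS, AddMonoidAlgebra.single_pow]

lemma LS_mul (u v) : LS k u * LS k v = LS (n := n) k (u + v) := by
  simp [LS, AddMonoidAlgebra.single_mul_single]

lemma LS_pow (u) (m : ℕ) : LS k u ^ m = LS (n := n) k (m • u) := by
  simp [LS, AddMonoidAlgebra.single_pow]

lemma prod_MS_pow (g : Fin n → (Fin n → ℕ) × (Fin n → ℕ) × (Fin n → ℤ)) (a : Fin n → ℕ)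
    (s : Finset (Fin n)) :
    ∏ i ∈ s, MS k (g i) ^ (a i) = MS k (∑ i ∈ s, a i • g i) := by
  classical
  induction s using Finset.induction_on with
  | empty => simp [MS, AddMonoidAlgebra.one_def]
  | insert _ _ h ih => rw [Finset.prod_insert h, Finset.sum_insert h, ih, MS_pow, MS_mul]

lemma prod_LS_pow (g : Fin n → (Fin n → ℤ) × (Fin n → ℤ)) (a : Fin n → ℕ)
    (s : Finset (Fin n)) :
    ∏ i ∈ s, LS k (g i) ^ (a i) = LS k (∑ i ∈ s, a i • g i) := by
  classical
  induction s using Finset.induction_on with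
  | empty => simp [LS, AddMonoidAlgebra.one_def]
  | insert _ _ h ih => rw [Finset.prod_insert h, Finset.sum_insert h, ih, LS_pow, LS_mul]

lemma bX_eq (i : Fin n) : bX k n i = MS k (Pi.single i 1, 0, 0) := rfl
lemma bY_eq (i : Fin n) : bY k n i = MS k (0, Pi.single i 1, 0) := rfl
lemma bZ_eq (i : Fin n) : bZ k n i = MS k (0, 0, Pi.single i 1) := rfl
lemma tX_eq (i : Fin n) : tX k n i = LS k ((Pi.single i 1 : Fin n → ℤ), 0) := rfl
lemma tY_eq (i : Fin n) : tY k n i = LS k (0, (Pi.single i 1 : Fin n → ℤ)) := rfl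
lemma tXYinv_eq (i : Fin n) :
    tXYinv k n i = LS k ((Pi.single i 1 : Fin n → ℤ), -(Pi.single i 1 : Fin n → ℤ)) := rfl

lemma psi_single (ψ : MixedRing k n →ₐ[k] LaurentRing2 k n)
    (hx : ∀ i, ψ (bX k n i) = tX k n i)
    (hy : ∀ i, ψ (bY k n i) = tY k n i)
    (hz : ∀ i, ψ (bZ k n i) = tXYinv k n i)
    (a b : Fin n → ℕ) (c : Fin n → ℤ) :
    ψ (MS k (a, b, c))
      = LS k ((fun i => (a i : ℤ) + c i), fun i => (b i : ℤ) - c i) := by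
  have hXa : ∀ a : Fin n → ℕ, ψ (MS k (a, (0:Fin n → ℕ), (0:Fin n → ℤ)))
      = LS k ((fun i => (a i : ℤ)), (0 : Fin n → ℤ)) := by
    intro a
    have h1 : MS k (a, (0:Fin n → ℕ), (0:Fin n → ℤ)) = ∏ i, (bX k n i) ^ (a i) := by
      simp only [bX_eq, prod_MS_pow]
      congr 1
      ext j <;>
      simp [Prod.fst_sum, Prod.snd_sum, Finset.sum_apply, Pi.single_apply, Finset.sum_ite_eq']
    rw [h1, map_prod]
    simp only [map_pow, hx, tX_eq, prod_LS_pow]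
    congr 1
    ext j <;>
    simp [Prod.fst_sum, Prod.snd_sum, Finset.sum_apply, Pi.single_apply, Finset.sum_ite_eq']
  have hYb : ∀ b : Fin n → ℕ, ψ (MS k ((0:Fin n → ℕ), b, (0:Fin n → ℤ)))
      = LS k ((0 : Fin n → ℤ), fun i => (b i : ℤ)) := by
    intro b
    have h1 : MS k ((0:Fin n → ℕ), b, (0:Fin n → ℤ)) = ∏ i, (bY k n i) ^ (b i) := by
      simp only [bY_eq, prod_MS_pow]
      congr 1
      ext j <;>
      simp [Prod.fst_sum, Prod.snd_sum, Finset.sum_apply, Pi.single_apply, Finset.sum_ite_eq']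
    rw [h1, map_prod]
    simp only [map_pow, hy, tY_eq, prod_LS_pow]
    congr 1
    ext j <;>
    simp [Prod.fst_sum, Prod.snd_sum, Finset.sum_apply, Pi.single_apply, Finset.sum_ite_eq']
  have hZd : ∀ d : Fin n → ℕ,
      ψ (MS k ((0:Fin n → ℕ), (0:Fin n → ℕ), fun i => (d i : ℤ)))
      = LS k ((fun i => (d i : ℤ)), fun i => -(d i : ℤ)) := by
    intro d
    have h1 : MS k ((0:Fin n → ℕ), (0:Fin n → ℕ), fun i => (d i : ℤ))
        = ∏ i, (bZ k n i) ^ (d i) := by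
      simp only [bZ_eq, prod_MS_pow]
      congr 1
      ext j <;>
      simp [Prod.fst_sum, Prod.snd_sum, Finset.sum_apply, Pi.single_apply, Finset.sum_ite_eq']
    rw [h1, map_prod]
    simp only [map_pow, hz, tXYinv_eq, prod_LS_pow]
    congr 1
    ext j <;>
    simp [Prod.fst_sum, Prod.snd_sum, Finset.sum_apply, Pi.single_apply, Finset.sum_ite_eq']
  have hZc : ∀ c : Fin n → ℤ,
      ψ (MS k ((0:Fin n → ℕ), (0:Fin n → ℕ), c)) = LS k (c, -c) := by
    intro c
    set cp : Fin n → ℕ := fun i => (c i).toNat with hcp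
    set cm : Fin n → ℕ := fun i => (-(c i)).toNat with hcm
    have hmul : ψ (MS k ((0:Fin n → ℕ), (0:Fin n → ℕ), c))
        * LS k ((fun i => (cm i : ℤ)), fun i => -(cm i : ℤ))
        = LS k ((fun i => (cp i : ℤ)), fun i => -(cp i : ℤ)) := by
      rw [← hZd cm, ← map_mul, MS_mul, ← hZd cp]
      congr 2
      ext j <;> simp [hcp, hcm] <;> omega
    have hu : LS k ((fun i => (cm i : ℤ)), fun i => -(cm i : ℤ))
        * LS k ((fun i => -(cm i : ℤ)), fun i => (cm i : ℤ)) = 1 := by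
      rw [LS_mul]
      rw [show (1 : LaurentRing2 k n) = LS k 0 from rfl]
      congr 1
      ext j <;> simp
    calc ψ (MS k ((0:Fin n → ℕ), (0:Fin n → ℕ), c))
        = ψ (MS k ((0:Fin n → ℕ), (0:Fin n → ℕ), c))
          * (LS k ((fun i => (cm i : ℤ)), fun i => -(cm i : ℤ))
          * LS k ((fun i => -(cm i : ℤ)), fun i => (cm i : ℤ))) := by rw [hu, mul_one]
      _ = LS k ((fun i => (cp i : ℤ)), fun i => -(cp i : ℤ))
          * LS k ((fun i => -(cm i : ℤ)), fun i => (cm i : ℤ)) := by rw [← mul_assoc, hmul]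
      _ = LS k (c, -c) := by
            rw [LS_mul]
            congr 1
            ext j <;> simp [hcp, hcm] <;> omega
  have hsplit : MS k (a, b, c)
      = MS k (a, (0:Fin n → ℕ), (0:Fin n → ℤ)) * MS k ((0:Fin n → ℕ), b, (0:Fin n → ℤ))
        * MS k ((0:Fin n → ℕ), (0:Fin n → ℕ), c) := by
    rw [MS_mul, MS_mul]
    congr 1
    ext j <;> simp
  rw [hsplit, map_mul, map_mul, hXa, hYb, hZc, LS_mul, LS_mul]
  congr 1
  ext j <;> simp [sub_eq_add_neg]

variable (k) in
lemma single_eq_smul_MS (u : (Fin n → ℕ) × (Fin n → ℕ) × (Fin n → ℤ)) (r : k) :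
    (AddMonoidAlgebra.single u r : MixedRing k n) = r • MS k u := by
  rw [MS, AddMonoidAlgebra.smul_single', mul_one]

variable (k) in
lemma single_eq_smul_LS (u : (Fin n → ℤ) × (Fin n → ℤ)) (r : k) :
    (AddMonoidAlgebra.single u r : LaurentRing2 k n) = r • LS k u := by
  rw [LS, AddMonoidAlgebra.smul_single', mul_one]

/-- the monoid map inducing ψ -/
def fmap (u : (Fin n → ℕ) × (Fin n → ℕ) × (Fin n → ℤ)) : (Fin n → ℤ) × (Fin n → ℤ) :=
  ((fun i => (u.1 i : ℤ) + u.2.2 i), fun i => (u.2.1 i : ℤ) - u.2.2 i)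

/-- normal form map -/
def nm (u : (Fin n → ℕ) × (Fin n → ℕ) × (Fin n → ℤ)) :
    (Fin n → ℕ) × (Fin n → ℕ) × (Fin n → ℤ) :=
  (0, u.1 + u.2.1, (fun i => (u.1 i : ℤ)) + u.2.2)

/-- section of fmap on normal forms -/
def sec (v : (Fin n → ℤ) × (Fin n → ℤ)) : (Fin n → ℕ) × (Fin n → ℕ) × (Fin n → ℤ) :=
  ((0 : Fin n → ℕ), fun i => (v.1 i + v.2 i).toNat, v.1)

lemma sec_fmap (u : (Fin n → ℕ) × (Fin n → ℕ) × (Fin n → ℤ)) : sec (fmap u) = nm u := by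
  obtain ⟨a, b, c⟩ := u
  refine Prod.ext rfl (Prod.ext ?_ ?_)
  · funext j; simp [sec, fmap, nm]; omega
  · funext j; simp [sec, fmap, nm]

lemma psi_single' (ψ : MixedRing k n →ₐ[k] LaurentRing2 k n)
    (hx : ∀ i, ψ (bX k n i) = tX k n i)
    (hy : ∀ i, ψ (bY k n i) = tY k n i)
    (hz : ∀ i, ψ (bZ k n i) = tXYinv k n i)
    (u : (Fin n → ℕ) × (Fin n → ℕ) × (Fin n → ℤ)) (r : k) :
    ψ (AddMonoidAlgebra.single u r) = AddMonoidAlgebra.single (fmap u) r := by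
  obtain ⟨a, b, c⟩ := u
  rw [single_eq_smul_MS, map_smul, psi_single ψ hx hy hz, single_eq_smul_LS]
  rfl

lemma gen_shift (w : (Fin n → ℕ) × (Fin n → ℕ) × (Fin n → ℤ)) (i : Fin n) :
    MS k (w + (Pi.single i 1, 0, 0)) - MS k (w + (0, Pi.single i 1, Pi.single i 1))
      ∈ Ideal.span (Set.range fun i => bY k n i * bZ k n i - bX k n i) := by
  have h : bY k n i * bZ k n i - bX k n i
      = MS k (0, Pi.single i 1, Pi.single i 1) - MS k (Pi.single i 1, 0, 0) := by
    rw [bY_eq, bZ_eq, bX_eq, MS_mul]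
    congr 2
    ext j <;> simp
  have hg : bY k n i * bZ k n i - bX k n i
      ∈ Ideal.span (Set.range fun i => bY k n i * bZ k n i - bX k n i) :=
    Ideal.subset_span ⟨i, rfl⟩
  have h1 := Ideal.mul_mem_left _ (MS k w) hg
  rw [h, mul_sub, MS_mul, MS_mul] at h1
  have h2 := Submodule.neg_mem _ h1
  rwa [neg_sub] at h2

lemma nf_mem (a b : Fin n → ℕ) (c : Fin n → ℤ) :
    MS k (a, b, c) - MS k (0, a + b, (fun i => (a i : ℤ)) + c)
      ∈ Ideal.span (Set.range fun i => bY k n i * bZ k n i - bX k n i) := by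
  suffices H : ∀ s : ℕ, ∀ (a b : Fin n → ℕ) (c : Fin n → ℤ), (∑ i, a i) = s →
      MS k (a, b, c) - MS k (0, a + b, (fun i => (a i : ℤ)) + c)
      ∈ Ideal.span (Set.range fun i => bY k n i * bZ k n i - bX k n i) from
    H _ a b c rfl
  intro s
  induction s with
  | zero =>
      intro a b c h
      have ha : a = 0 := by
        funext j
        exact (Finset.sum_eq_zero_iff.mp h) j (Finset.mem_univ j)
      rw [ha]
      have he : ((0:Fin n → ℕ), (0:Fin n → ℕ) + b, (fun i => (((0:Fin n → ℕ)) i : ℤ)) + c)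
          = ((0:Fin n → ℕ), b, c) := by
        ext j <;> simp
      rw [he, sub_self]
      exact zero_mem _
  | succ s IH =>
      intro a b c h
      obtain ⟨i, hi⟩ : ∃ i, a i ≠ 0 := by
        by_contra hall
        push_neg at hall
        simp [hall] at h
      set a' : Fin n → ℕ := fun j => a j - (Pi.single i 1 : Fin n → ℕ) j with ha'
      have haa : a = a' + Pi.single i 1 := by
        funext j
        by_cases hj : j = i <;> simp [ha', Pi.single_apply, hj] <;> omega
      have hsum : ∑ j, a' j = s := by
        rw [haa] at h
        simp only [Pi.add_apply, Finset.sum_add_distrib, Pi.single_apply,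
          Finset.sum_ite_eq', Finset.mem_univ, if_true] at h
        omega
      have h1 := gen_shift (k := k) (a', b, c) i
      have h2 := IH a' (b + Pi.single i 1) (c + Pi.single i (1:ℤ)) hsum
      have e1 : (a', b, c) + ((Pi.single i 1 : Fin n → ℕ), 0, 0) = (a, b, c) := by
        rw [haa]; ext j <;> simp
      have e2 : (a', b, c) + ((0:Fin n → ℕ), Pi.single i 1, Pi.single i 1)
          = (a', b + Pi.single i 1, c + Pi.single i (1:ℤ)) := by
        ext j <;> simp
      have e3 : ((0:Fin n → ℕ), a' + (b + Pi.single i 1),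
            (fun j => (a' j : ℤ)) + (c + Pi.single i (1:ℤ)))
          = ((0:Fin n → ℕ), a + b, (fun j => (a j : ℤ)) + c) := by
        rw [haa]
        ext j <;> simp [Pi.single_apply] <;> split <;> push_cast <;> ring
      rw [e1, e2] at h1
      rw [e3] at h2
      have := Ideal.add_mem _ h1 h2
      rwa [sub_add_sub_cancel] at this

variable (k) (n)

/-- Let `ψ : B → T` be the `k`-algebra homomorphism determined by `ψ(xᵢ) = xᵢ`,
`ψ(yᵢ) = yᵢ` and `ψ(zᵢ) = xᵢ yᵢ^{−1}`.  Then `ker ψ = ⟨ yᵢ zᵢ − xᵢ : i ⟩`. -/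
theorem kernel_of_lattice_module_map
    (hn : 1 ≤ n) (ψ : MixedRing k n →ₐ[k] LaurentRing2 k n)
    (hx : ∀ i, ψ (bX k n i) = tX k n i)
    (hy : ∀ i, ψ (bY k n i) = tY k n i)
    (hz : ∀ i, ψ (bZ k n i) = tXYinv k n i) :
    RingHom.ker (ψ : MixedRing k n →+* LaurentRing2 k n)
      = Ideal.span (Set.range fun i => bY k n i * bZ k n i - bX k n i) := by
  classical
  apply le_antisymm
  · -- ker ⊆ span
    intro p hp
    have hp0 : ψ p = 0 := hp
    have hp_sum : p = ∑ u ∈ p.coeff.support, AddMonoidAlgebra.single u (p.coeff u) := by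
      conv_lhs => rw [← AddMonoidAlgebra.sum_coeff_single p]
      rfl
    have hps : ψ p = ∑ u ∈ p.coeff.support, AddMonoidAlgebra.single (fmap u) (p.coeff u) := by
      conv_lhs => rw [hp_sum]
      rw [map_sum]
      exact Finset.sum_congr rfl fun u _ => psi_single' ψ hx hy hz u (p.coeff u)
    -- apply mapDomain sec
    have h2 : ∑ u ∈ p.coeff.support, (AddMonoidAlgebra.single (fmap u) (p.coeff u) :
        LaurentRing2 k n) = 0 := by
      rw [← hps]; exact hp0
    have h3 := congrArg (AddMonoidAlgebra.mapDomainLinearMap k k sec) h2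
    rw [map_sum, map_zero] at h3
    simp only [AddMonoidAlgebra.mapDomainLinearMap_single, sec_fmap] at h3
    -- h3 : ∑ u ∈ p.coeff.support, single (nm u) (p.coeff u) = 0
    have h3' : (∑ u ∈ p.coeff.support, AddMonoidAlgebra.single (nm u) (p.coeff u) : MixedRing k n) = 0 := h3
    have hpq : p - (∑ u ∈ p.coeff.support, AddMonoidAlgebra.single (nm u) (p.coeff u) : MixedRing k n)
        ∈ Ideal.span (Set.range fun i => bY k n i * bZ k n i - bX k n i) := by
      have hd : (∑ u ∈ p.coeff.support, (p.coeff u) • (MS k u - MS k (nm u)))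
          = p - (∑ u ∈ p.coeff.support, AddMonoidAlgebra.single (nm u) (p.coeff u) : MixedRing k n) := by
        calc (∑ u ∈ p.coeff.support, (p.coeff u) • (MS k u - MS k (nm u)))
            = ∑ u ∈ p.coeff.support,
              ((AddMonoidAlgebra.single u (p.coeff u) : MixedRing k n) - AddMonoidAlgebra.single (nm u) (p.coeff u)) :=
              Finset.sum_congr rfl fun u _ => by
                rw [smul_sub, ← single_eq_smul_MS, ← single_eq_smul_MS]
          _ = (∑ u ∈ p.coeff.support, (AddMonoidAlgebra.single u (p.coeff u) : MixedRing k n))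
              - ∑ u ∈ p.coeff.support, (AddMonoidAlgebra.single (nm u) (p.coeff u) : MixedRing k n) :=
              Finset.sum_sub_distrib _ _
          _ = p - (∑ u ∈ p.coeff.support, AddMonoidAlgebra.single (nm u) (p.coeff u) : MixedRing k n) := by
              rw [← hp_sum]
      rw [← hd]
      refine Ideal.sum_mem _ fun u _ => ?_
      rw [Algebra.smul_def]
      refine Ideal.mul_mem_left _ _ ?_
      obtain ⟨a, b, c⟩ := u
      exact nf_mem a b c
    rw [h3', sub_zero] at hpq
    exact hpq
  · -- span ⊆ ker
    rw [Ideal.span_le]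
    rintro _ ⟨i, rfl⟩
    have : ψ (bY k n i * bZ k n i - bX k n i) = 0 := by
      rw [map_sub, map_mul, hx, hy, hz, tY_eq, tXYinv_eq, tX_eq, LS_mul, sub_eq_zero]
      congr 1
      ext j <;> simp
    exact this

end
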